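/- Under the separable least-squares model assumptions, the residual part of the Hessian H_r(θ) = Σ_{ℓ=1}^N r_ℓ(θ)·∇²r_ℓ(θ) satisfies, for every θ = (x, y) with x ∈ Ω and y ∈ ℝ^d, the perturbation bound ‖H_r(θ) − H_r(θ*)‖ ≤ c_{r,0}·ρ₁(θ, θ*) + (‖w‖ + ρ₁(θ, θ*))·ρ₂(θ, θ*), where c_{r,0} = σ₂‖y*‖ + 2σ₁, ρ₁(θ, θ*) = σ₁‖y*‖‖x − x*‖ + σ₀‖y − y*‖, ρ₂(θ, θ*) = (σ₃‖y*‖ + σ₂)‖x − x*‖ + 2σ₂‖y − y*‖, and the norm on the left is the spectral norm. -/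

import Mathlib

/-!
STATEMENT 2: Perturbation bound for the residual part of the Hessian.

The parameter space is `ThetaSpace p d = WithLp 2 (ℝ^p ×ₗ² ℝ^d)` (Euclidean norm on the
concatenation), so that the operator norm of the bilinear form
`H_r(θ) = Σ_ℓ r_ℓ(θ)·∇²r_ℓ(θ)` is the spectral norm of the corresponding symmetric matrix.
-/

noncomputable section

abbrev EucSp (n : ℕ) : Type := EuclideanSpace ℝ (Fin n)

abbrev ThetaSpace (p d : ℕ) : Type := WithLp 2 (EucSp p × EucSp d)

def thX {p d : ℕ} (θ : ThetaSpace p d) : EucSp p := (WithLp.equiv 2 (EucSp p × EucSp d) θ).1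

def thY {p d : ℕ} (θ : ThetaSpace p d) : EucSp d := (WithLp.equiv 2 (EucSp p × EucSp d) θ).2

def thMk {p d : ℕ} (x : EucSp p) (y : EucSp d) : ThetaSpace p d :=
  (WithLp.equiv 2 (EucSp p × EucSp d)).symm (x, y)

/-- The residual `r(θ) = z − A(x) y` of the separable model. -/
def resid {p d N : ℕ} (A : EucSp p → (EucSp d →L[ℝ] EucSp N)) (z : EucSp N)
    (θ : ThetaSpace p d) : EucSp N :=
  z - A (thX θ) (thY θ)

/-- The residual part of the Hessian, `H_r(θ) = Σ_{ℓ=1}^N r_ℓ(θ)·∇²r_ℓ(θ)`, as a (continuous)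
bilinear form on the parameter space. -/
def residHess {p d N : ℕ} (A : EucSp p → (EucSp d →L[ℝ] EucSp N)) (z : EucSp N)
    (θ : ThetaSpace p d) : ThetaSpace p d →L[ℝ] ThetaSpace p d →L[ℝ] ℝ :=
  ∑ ℓ : Fin N, (resid A z θ ℓ) • fderiv ℝ (fderiv ℝ (fun t => resid A z t ℓ)) θ

namespace RHPB

/-! ### Projections of the `L²` product space -/

section Proj
variable {p d N : ℕ}

def px (p d : ℕ) : ThetaSpace p d →L[ℝ] EucSp p :=
  (ContinuousLinearMap.fst ℝ (EucSp p) (EucSp d)).comp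
    (WithLp.prodContinuousLinearEquiv 2 ℝ (EucSp p) (EucSp d)).toContinuousLinearMap

def py (p d : ℕ) : ThetaSpace p d →L[ℝ] EucSp d :=
  (ContinuousLinearMap.snd ℝ (EucSp p) (EucSp d)).comp
    (WithLp.prodContinuousLinearEquiv 2 ℝ (EucSp p) (EucSp d)).toContinuousLinearMap

lemma px_thMk (x : EucSp p) (y : EucSp d) : px p d (thMk x y) = x := rfl
lemma py_thMk (x : EucSp p) (y : EucSp d) : py p d (thMk x y) = y := rfl

lemma norm_sq_split (u : ThetaSpace p d) : ‖u‖ ^ 2 = ‖px p d u‖ ^ 2 + ‖py p d u‖ ^ 2 :=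
  WithLp.prod_norm_sq_eq_of_L2 u

lemma norm_px_le (u : ThetaSpace p d) : ‖px p d u‖ ≤ ‖u‖ := by
  nlinarith [norm_sq_split u, norm_nonneg u, norm_nonneg (px p d u), norm_nonneg (py p d u)]

lemma norm_py_le (u : ThetaSpace p d) : ‖py p d u‖ ≤ ‖u‖ := by
  nlinarith [norm_sq_split u, norm_nonneg u, norm_nonneg (px p d u), norm_nonneg (py p d u)]

lemma cross_le (u v : ThetaSpace p d) :
    ‖px p d u‖ * ‖py p d v‖ + ‖py p d u‖ * ‖px p d v‖ ≤ ‖u‖ * ‖v‖ := by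
  nlinarith [norm_sq_split u, norm_sq_split v, norm_nonneg u, norm_nonneg v,
    norm_nonneg (px p d u), norm_nonneg (py p d u), norm_nonneg (px p d v), norm_nonneg (py p d v),
    sq_nonneg (‖px p d u‖ * ‖px p d v‖ - ‖py p d u‖ * ‖py p d v‖),
    sq_nonneg (‖u‖ * ‖v‖ - (‖px p d u‖ * ‖py p d v‖ + ‖py p d u‖ * ‖px p d v‖)),
    mul_nonneg (norm_nonneg u) (norm_nonneg v)]

end Proj

/-! ### Abstract derivative computations -/

section Abstract
variable {T E F G : Type*}
  [NormedAddCommGroup T] [NormedSpace ℝ T]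
  [NormedAddCommGroup E] [NormedSpace ℝ E]
  [NormedAddCommGroup F] [NormedSpace ℝ F]
  [NormedAddCommGroup G] [NormedSpace ℝ G]

variable (qx : T →L[ℝ] E) (qy : T →L[ℝ] F) (A : E → (F →L[ℝ] G))

def Fa (θ : T) : G := A (qx θ) (qy θ)

def DFa (θ : T) : T →L[ℝ] G :=
  (A (qx θ)).comp qy + ((fderiv ℝ A (qx θ)).comp qx).flip (qy θ)

def Cya : (F →L[ℝ] G) →L[ℝ] (T →L[ℝ] G) :=
  (ContinuousLinearMap.compL ℝ T F G).flip qy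

def Kca : (E →L[ℝ] F →L[ℝ] G) →L[ℝ] (F →L[ℝ] T →L[ℝ] G) :=
  ((ContinuousLinearMap.flipₗᵢ ℝ T F G).toLinearIsometry.toContinuousLinearMap).comp
    ((ContinuousLinearMap.compL ℝ T E (F →L[ℝ] G)).flip qx)

def D2Fa (θ : T) : T →L[ℝ] T →L[ℝ] G :=
  (Cya qy).comp ((fderiv ℝ A (qx θ)).comp qx) +
    ((Kca qx (fderiv ℝ A (qx θ))).comp qy +
      ((Kca qx).comp ((fderiv ℝ (fderiv ℝ A) (qx θ)).comp qx)).flip (qy θ))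

variable {A}

lemma hasFDerivAt_Fa (hA : Differentiable ℝ A) (θ : T) :
    HasFDerivAt (Fa qx qy A) (DFa qx qy A θ) θ := by
  have hc : HasFDerivAt (fun t : T => A (qx t))
      ((fderiv ℝ A (qx θ)).comp qx) θ :=
    ((hA (qx θ)).hasFDerivAt).comp θ qx.hasFDerivAt
  exact hc.clm_apply qy.hasFDerivAt

lemma hasFDerivAt_DFa (hA : Differentiable ℝ A) (hA' : Differentiable ℝ (fderiv ℝ A))
    (θ : T) : HasFDerivAt (DFa qx qy A) (D2Fa qx qy A θ) θ := by
  have hinner1 : HasFDerivAt (fun t : T => A (qx t))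
      ((fderiv ℝ A (qx θ)).comp qx) θ :=
    ((hA (qx θ)).hasFDerivAt).comp θ qx.hasFDerivAt
  have h1' : HasFDerivAt (𝕜 := ℝ) (Cya (T := T) (G := G) qy) (Cya (G := G) qy) (A (qx θ)) := by
    exact (Cya (T := T) (G := G) qy).hasFDerivAt
  have h1 := h1'.comp θ hinner1
  have hinner : HasFDerivAt (fun t : T => fderiv ℝ A (qx t))
      ((fderiv ℝ (fderiv ℝ A) (qx θ)).comp qx) θ :=
    HasFDerivAt.comp (g := fderiv ℝ A) θ (hA' (qx θ)).hasFDerivAt qx.hasFDerivAt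
  have hc2' : HasFDerivAt (𝕜 := ℝ) (Kca (T := T) (F := F) (G := G) qx) (Kca (F := F) (G := G) qx)
      (fderiv ℝ A (qx θ)) := by
    exact (Kca (T := T) (F := F) (G := G) qx).hasFDerivAt
  have hc2 := HasFDerivAt.comp (g := Kca (T := T) (F := F) (G := G) qx) θ hc2'
    (HasFDerivAt.comp (g := fderiv ℝ A) θ (hA' (qx θ)).hasFDerivAt qx.hasFDerivAt)
  have h2 := hc2.clm_apply qy.hasFDerivAt
  exact h1.add h2

lemma D2Fa_apply (θ u v : T) :
    D2Fa qx qy A θ u v =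
      fderiv ℝ A (qx θ) (qx u) (qy v) +
        (fderiv ℝ A (qx θ) (qx v) (qy u) +
          fderiv ℝ (fderiv ℝ A) (qx θ) (qx u) (qx v) (qy θ)) := rfl

lemma fderiv_fderiv_scalar (hA : Differentiable ℝ A) (hA' : Differentiable ℝ (fderiv ℝ A))
    (P : G →L[ℝ] ℝ) (c : ℝ) (θ : T) :
    fderiv ℝ (fderiv ℝ (fun t : T => c - P (Fa qx qy A t))) θ =
      -((ContinuousLinearMap.compL ℝ T G ℝ P).comp (D2Fa qx qy A θ)) := by
  have hg : ∀ t : T, HasFDerivAt (fun t : T => c - P (Fa qx qy A t))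
      (-(P.comp (DFa qx qy A t))) t := fun t =>
    ((P.hasFDerivAt).comp t (hasFDerivAt_Fa qx qy hA t)).const_sub c
  have h1 : fderiv ℝ (fun t : T => c - P (Fa qx qy A t))
      = fun t => -(P.comp (DFa qx qy A t)) := funext fun t => (hg t).fderiv
  rw [h1]
  have hP : HasFDerivAt (ContinuousLinearMap.compL ℝ T G ℝ P)
      (ContinuousLinearMap.compL ℝ T G ℝ P) (DFa qx qy A θ) := by
    exact (ContinuousLinearMap.compL ℝ T G ℝ P).hasFDerivAt
  have h2 : HasFDerivAt (fun t : T => -((ContinuousLinearMap.compL ℝ T G ℝ P) (DFa qx qy A t)))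
      (-((ContinuousLinearMap.compL ℝ T G ℝ P).comp (D2Fa qx qy A θ))) θ :=
    ((hP.comp θ (hasFDerivAt_DFa qx qy hA hA' θ))).neg
  exact h2.fderiv

end Abstract

/-! ### Concrete instantiation -/

section Concrete
variable {p d N : ℕ} {A : EucSp p → (EucSp d →L[ℝ] EucSp N)}

set_option maxHeartbeats 1000000 in
lemma fderiv2_resid (hAd : Differentiable ℝ A) (hA'd : Differentiable ℝ (fderiv ℝ A))
    (z : EucSp N) (ℓ : Fin N) (θ : ThetaSpace p d) :
    fderiv ℝ (fderiv ℝ (fun t => resid A z t ℓ)) θ =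
      -((ContinuousLinearMap.compL ℝ (ThetaSpace p d) (EucSp N) ℝ
          (EuclideanSpace.proj ℓ)).comp (D2Fa (px p d) (py p d) A θ)) := by
  have hfun : (fun t : ThetaSpace p d => resid A z t ℓ)
      = fun t => z ℓ - (EuclideanSpace.proj (𝕜 := ℝ) ℓ) (Fa (px p d) (py p d) A t) := rfl
  rw [hfun, fderiv_fderiv_scalar (px p d) (py p d) hAd hA'd _ _ θ]

lemma sum_mul_le (f g : EucSp N) : |∑ ℓ, f ℓ * g ℓ| ≤ ‖f‖ * ‖g‖ := by
  have h : (inner ℝ f g : ℝ) = ∑ ℓ, f ℓ * g ℓ := by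
    simp [PiLp.inner_apply, RCLike.inner_apply, conj_trivial, mul_comm]
  rw [← h]
  exact abs_real_inner_le_norm f g

set_option maxHeartbeats 1000000 in
lemma residHess_apply (hAd : Differentiable ℝ A) (hA'd : Differentiable ℝ (fderiv ℝ A))
    (z : EucSp N) (θ u v : ThetaSpace p d) :
    residHess A z θ u v
      = -∑ ℓ, resid A z θ ℓ * (D2Fa (px p d) (py p d) A θ u v) ℓ := by
  unfold residHess
  simp only [ContinuousLinearMap.sum_apply, ContinuousLinearMap.smul_apply,
    fderiv2_resid hAd hA'd z, ContinuousLinearMap.neg_apply, ContinuousLinearMap.comp_apply,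
    ContinuousLinearMap.compL_apply, smul_eq_mul, mul_neg]
  rw [← Finset.sum_neg_distrib]
  exact Finset.sum_congr rfl fun ℓ _ => rfl

end Concrete
end RHPB

open RHPB in
set_option maxHeartbeats 2000000 in
/-- **Residual Hessian perturbation bound.**
`‖H_r(θ) − H_r(θ*)‖ ≤ c_{r,0}·ρ₁(θ,θ*) + (‖w‖ + ρ₁(θ,θ*))·ρ₂(θ,θ*)` with
`c_{r,0} = σ₂‖y*‖ + 2σ₁`, `ρ₁ = σ₁‖y*‖‖x−x*‖ + σ₀‖y−y*‖`, and
`ρ₂ = (σ₃‖y*‖ + σ₂)‖x−x*‖ + 2σ₂‖y−y*‖`. -/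
theorem residual_hessian_perturbation_bound
    {p d N : ℕ}
    (Ω : Set (EucSp p)) (hΩconv : Convex ℝ Ω) (hΩcomp : IsCompact Ω)
    (A : EucSp p → (EucSp d →L[ℝ] EucSp N)) (hA : ContDiff ℝ 3 A)
    (σ0 σ1 σ2 σ3 : ℝ)
    (hσ0 : ∀ x ∈ Ω, ‖A x‖ ≤ σ0)
    (hσ1 : ∀ x ∈ Ω, ‖iteratedFDeriv ℝ 1 A x‖ ≤ σ1)
    (hσ2 : ∀ x ∈ Ω, ‖iteratedFDeriv ℝ 2 A x‖ ≤ σ2)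
    (hσ3 : ∀ x ∈ Ω, ‖iteratedFDeriv ℝ 3 A x‖ ≤ σ3)
    (xs : EucSp p) (hxs : xs ∈ Ω) (ys : EucSp d) (w : EucSp N)
    (x : EucSp p) (hx : x ∈ Ω) (y : EucSp d) :
    ‖residHess A (A xs ys + w) (thMk x y) - residHess A (A xs ys + w) (thMk xs ys)‖
      ≤ (σ2 * ‖ys‖ + 2 * σ1) * (σ1 * ‖ys‖ * ‖x - xs‖ + σ0 * ‖y - ys‖)
        + (‖w‖ + (σ1 * ‖ys‖ * ‖x - xs‖ + σ0 * ‖y - ys‖))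
          * ((σ3 * ‖ys‖ + σ2) * ‖x - xs‖ + 2 * σ2 * ‖y - ys‖) := by
  -- differentiability facts
  have hAd : Differentiable ℝ A := hA.differentiable (by norm_num)
  have hA'd : Differentiable ℝ (fderiv ℝ A) :=
    (hA.fderiv_right (m := 2) (by norm_num)).differentiable (by norm_num)
  -- nonnegativity of the spectral constants
  have hσ0n : 0 ≤ σ0 := le_trans (norm_nonneg _) (hσ0 xs hxs)
  have hσ1n : 0 ≤ σ1 := le_trans (norm_nonneg _) (hσ1 xs hxs)
  have hσ2n : 0 ≤ σ2 := le_trans (norm_nonneg _) (hσ2 xs hxs)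
  have hσ3n : 0 ≤ σ3 := le_trans (norm_nonneg _) (hσ3 xs hxs)
  -- norm identities
  have e1 : ∀ t : EucSp p, ‖fderiv ℝ A t‖ = ‖iteratedFDeriv ℝ 1 A t‖ := fun t => by
    rw [← norm_iteratedFDeriv_zero (𝕜 := ℝ) (f := fderiv ℝ A) (x := t),
      norm_iteratedFDeriv_fderiv]
  -- pointwise bounds
  have hA1ap : ∀ t ∈ Ω, ∀ (cE : EucSp p) (cF : EucSp d),
      ‖fderiv ℝ A t cE cF‖ ≤ σ1 * ‖cE‖ * ‖cF‖ := by
    intro t ht cE cF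
    calc ‖fderiv ℝ A t cE cF‖ ≤ ‖fderiv ℝ A t cE‖ * ‖cF‖ :=
          (fderiv ℝ A t cE).le_opNorm cF
    _ ≤ (σ1 * ‖cE‖) * ‖cF‖ := by
          refine mul_le_mul_of_nonneg_right ?_ (norm_nonneg cF)
          calc ‖fderiv ℝ A t cE‖ ≤ ‖fderiv ℝ A t‖ * ‖cE‖ := (fderiv ℝ A t).le_opNorm cE
          _ ≤ σ1 * ‖cE‖ := by
                refine mul_le_mul_of_nonneg_right ?_ (norm_nonneg cE)
                rw [e1 t]; exact hσ1 t ht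
    _ = σ1 * ‖cE‖ * ‖cF‖ := by ring
  have hA2norm : ∀ t ∈ Ω, ∀ (a b : EucSp p),
      ‖fderiv ℝ (fderiv ℝ A) t a b‖ ≤ σ2 * ‖a‖ * ‖b‖ := by
    intro t ht a b
    have happ : fderiv ℝ (fderiv ℝ A) t a b = iteratedFDeriv ℝ 2 A t ![a, b] := by
      rw [iteratedFDeriv_two_apply]; simp
    rw [happ]
    calc ‖iteratedFDeriv ℝ 2 A t ![a, b]‖
        ≤ ‖iteratedFDeriv ℝ 2 A t‖ * ∏ i, ‖(![a, b]) i‖ :=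
          (iteratedFDeriv ℝ 2 A t).le_opNorm ![a, b]
    _ = ‖iteratedFDeriv ℝ 2 A t‖ * (‖a‖ * ‖b‖) := by
          rw [Fin.prod_univ_two]; simp
    _ ≤ σ2 * (‖a‖ * ‖b‖) :=
          mul_le_mul_of_nonneg_right (hσ2 t ht) (mul_nonneg (norm_nonneg a) (norm_nonneg b))
    _ = σ2 * ‖a‖ * ‖b‖ := by ring
  have hA2ap : ∀ t ∈ Ω, ∀ (a b : EucSp p) (cF : EucSp d),
      ‖fderiv ℝ (fderiv ℝ A) t a b cF‖ ≤ σ2 * ‖a‖ * ‖b‖ * ‖cF‖ := by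
    intro t ht a b cF
    calc ‖fderiv ℝ (fderiv ℝ A) t a b cF‖ ≤ ‖fderiv ℝ (fderiv ℝ A) t a b‖ * ‖cF‖ :=
          (fderiv ℝ (fderiv ℝ A) t a b).le_opNorm cF
    _ ≤ σ2 * ‖a‖ * ‖b‖ * ‖cF‖ :=
          mul_le_mul_of_nonneg_right (hA2norm t ht a b) (norm_nonneg cF)
  -- Lipschitz bounds via the mean value inequality
  have lip0 : ‖A x - A xs‖ ≤ σ1 * ‖x - xs‖ := by
    refine hΩconv.norm_image_sub_le_of_norm_fderiv_le (fun t _ => hAd t) ?_ hxs hx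
    intro t ht; rw [e1 t]; exact hσ1 t ht
  have lipIt1 : ‖iteratedFDeriv ℝ 1 A x - iteratedFDeriv ℝ 1 A xs‖ ≤ σ2 * ‖x - xs‖ := by
    refine hΩconv.norm_image_sub_le_of_norm_fderiv_le
      (fun t _ => hA.differentiable_iteratedFDeriv (by norm_num) t) ?_ hxs hx
    intro t ht; rw [norm_fderiv_iteratedFDeriv]; exact hσ2 t ht
  have lipIt2 : ‖iteratedFDeriv ℝ 2 A x - iteratedFDeriv ℝ 2 A xs‖ ≤ σ3 * ‖x - xs‖ := by
    refine hΩconv.norm_image_sub_le_of_norm_fderiv_le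
      (fun t _ => hA.differentiable_iteratedFDeriv (by norm_num) t) ?_ hxs hx
    intro t ht; rw [norm_fderiv_iteratedFDeriv]; exact hσ3 t ht
  have lip1ap : ∀ (cE : EucSp p) (cF : EucSp d),
      ‖fderiv ℝ A x cE cF - fderiv ℝ A xs cE cF‖ ≤ σ2 * ‖x - xs‖ * ‖cE‖ * ‖cF‖ := by
    intro cE cF
    have happ : fderiv ℝ A x cE - fderiv ℝ A xs cE
        = (iteratedFDeriv ℝ 1 A x - iteratedFDeriv ℝ 1 A xs) ![cE] := by
      rw [ContinuousMultilinearMap.sub_apply, iteratedFDeriv_one_apply,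
        iteratedFDeriv_one_apply]; simp
    have h1 : ‖fderiv ℝ A x cE - fderiv ℝ A xs cE‖ ≤ σ2 * ‖x - xs‖ * ‖cE‖ := by
      rw [happ]
      calc ‖(iteratedFDeriv ℝ 1 A x - iteratedFDeriv ℝ 1 A xs) ![cE]‖
          ≤ ‖iteratedFDeriv ℝ 1 A x - iteratedFDeriv ℝ 1 A xs‖ * ∏ i, ‖(![cE]) i‖ :=
            (iteratedFDeriv ℝ 1 A x - iteratedFDeriv ℝ 1 A xs).le_opNorm ![cE]
      _ = ‖iteratedFDeriv ℝ 1 A x - iteratedFDeriv ℝ 1 A xs‖ * ‖cE‖ := by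
            rw [Fin.prod_univ_one]; simp
      _ ≤ σ2 * ‖x - xs‖ * ‖cE‖ := mul_le_mul_of_nonneg_right lipIt1 (norm_nonneg cE)
    calc ‖fderiv ℝ A x cE cF - fderiv ℝ A xs cE cF‖
        = ‖(fderiv ℝ A x cE - fderiv ℝ A xs cE) cF‖ := by
          rw [ContinuousLinearMap.sub_apply]
    _ ≤ ‖fderiv ℝ A x cE - fderiv ℝ A xs cE‖ * ‖cF‖ :=
          (fderiv ℝ A x cE - fderiv ℝ A xs cE).le_opNorm cF
    _ ≤ σ2 * ‖x - xs‖ * ‖cE‖ * ‖cF‖ := mul_le_mul_of_nonneg_right h1 (norm_nonneg cF)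
  have lip2ap : ∀ (a b : EucSp p) (cF : EucSp d),
      ‖fderiv ℝ (fderiv ℝ A) x a b cF - fderiv ℝ (fderiv ℝ A) xs a b cF‖
        ≤ σ3 * ‖x - xs‖ * ‖a‖ * ‖b‖ * ‖cF‖ := by
    intro a b cF
    have happ : fderiv ℝ (fderiv ℝ A) x a b - fderiv ℝ (fderiv ℝ A) xs a b
        = (iteratedFDeriv ℝ 2 A x - iteratedFDeriv ℝ 2 A xs) ![a, b] := by
      rw [ContinuousMultilinearMap.sub_apply, iteratedFDeriv_two_apply,
        iteratedFDeriv_two_apply]; simp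
    have h1 : ‖fderiv ℝ (fderiv ℝ A) x a b - fderiv ℝ (fderiv ℝ A) xs a b‖
        ≤ σ3 * ‖x - xs‖ * ‖a‖ * ‖b‖ := by
      rw [happ]
      calc ‖(iteratedFDeriv ℝ 2 A x - iteratedFDeriv ℝ 2 A xs) ![a, b]‖
          ≤ ‖iteratedFDeriv ℝ 2 A x - iteratedFDeriv ℝ 2 A xs‖ * ∏ i, ‖(![a, b]) i‖ :=
            (iteratedFDeriv ℝ 2 A x - iteratedFDeriv ℝ 2 A xs).le_opNorm ![a, b]
      _ = ‖iteratedFDeriv ℝ 2 A x - iteratedFDeriv ℝ 2 A xs‖ * (‖a‖ * ‖b‖) := by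
            rw [Fin.prod_univ_two]; simp
      _ ≤ (σ3 * ‖x - xs‖) * (‖a‖ * ‖b‖) :=
            mul_le_mul_of_nonneg_right lipIt2 (mul_nonneg (norm_nonneg a) (norm_nonneg b))
      _ = σ3 * ‖x - xs‖ * ‖a‖ * ‖b‖ := by ring
    calc ‖fderiv ℝ (fderiv ℝ A) x a b cF - fderiv ℝ (fderiv ℝ A) xs a b cF‖
        = ‖(fderiv ℝ (fderiv ℝ A) x a b - fderiv ℝ (fderiv ℝ A) xs a b) cF‖ := by
          rw [ContinuousLinearMap.sub_apply]
    _ ≤ ‖fderiv ℝ (fderiv ℝ A) x a b - fderiv ℝ (fderiv ℝ A) xs a b‖ * ‖cF‖ :=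
          (fderiv ℝ (fderiv ℝ A) x a b - fderiv ℝ (fderiv ℝ A) xs a b).le_opNorm cF
    _ ≤ σ3 * ‖x - xs‖ * ‖a‖ * ‖b‖ * ‖cF‖ := mul_le_mul_of_nonneg_right h1 (norm_nonneg cF)
  -- residual values
  set z := A xs ys + w with hz
  set ρ1 := σ1 * ‖ys‖ * ‖x - xs‖ + σ0 * ‖y - ys‖ with hρ1def
  have hρ1n : 0 ≤ ρ1 := by
    have : 0 ≤ σ1 * ‖ys‖ * ‖x - xs‖ :=
      mul_nonneg (mul_nonneg hσ1n (norm_nonneg ys)) (norm_nonneg _)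
    have : 0 ≤ σ0 * ‖y - ys‖ := mul_nonneg hσ0n (norm_nonneg _)
    positivity
  have hax : resid A z (thMk x y) = z - A x y := rfl
  have haxs : resid A z (thMk xs ys) = w := by
    rw [show resid A z (thMk xs ys) = z - A xs ys from rfl, hz]; abel
  have hdiff : resid A z (thMk x y) - resid A z (thMk xs ys)
      = (A xs - A x) ys + A x (ys - y) := by
    rw [hax, haxs, hz, ContinuousLinearMap.sub_apply, map_sub]; abel
  have hρ1bound : ‖resid A z (thMk x y) - resid A z (thMk xs ys)‖ ≤ ρ1 := by
    rw [hdiff]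
    calc ‖(A xs - A x) ys + A x (ys - y)‖
        ≤ ‖(A xs - A x) ys‖ + ‖A x (ys - y)‖ := norm_add_le _ _
    _ ≤ ‖A xs - A x‖ * ‖ys‖ + ‖A x‖ * ‖ys - y‖ :=
          add_le_add ((A xs - A x).le_opNorm ys) ((A x).le_opNorm (ys - y))
    _ ≤ (σ1 * ‖x - xs‖) * ‖ys‖ + σ0 * ‖y - ys‖ := by
          refine add_le_add ?_ ?_
          · refine mul_le_mul_of_nonneg_right ?_ (norm_nonneg ys)
            rw [norm_sub_rev]; exact lip0
          · rw [norm_sub_rev (ys) y]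
            exact mul_le_mul_of_nonneg_right (hσ0 x hx) (norm_nonneg _)
    _ = ρ1 := by rw [hρ1def]; ring
  have hanorm : ‖resid A z (thMk x y)‖ ≤ ‖w‖ + ρ1 := by
    have h' : resid A z (thMk x y)
        = w + (resid A z (thMk x y) - resid A z (thMk xs ys)) := by
      rw [haxs]; abel
    calc ‖resid A z (thMk x y)‖
        = ‖w + (resid A z (thMk x y) - resid A z (thMk xs ys))‖ := by rw [← h']
    _ ≤ ‖w‖ + ‖resid A z (thMk x y) - resid A z (thMk xs ys)‖ := norm_add_le _ _
    _ ≤ ‖w‖ + ρ1 := add_le_add_right hρ1bound ‖w‖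
  -- operator norm bound
  have hC : 0 ≤ (σ2 * ‖ys‖ + 2 * σ1) * ρ1 + (‖w‖ + ρ1) * ((σ3 * ‖ys‖ + σ2) * ‖x - xs‖
      + 2 * σ2 * ‖y - ys‖) := by
    have h1 : 0 ≤ σ2 * ‖ys‖ + 2 * σ1 := by positivity
    have h2 : 0 ≤ (σ3 * ‖ys‖ + σ2) * ‖x - xs‖ + 2 * σ2 * ‖y - ys‖ := by positivity
    have h3 : 0 ≤ ‖w‖ + ρ1 := by positivity
    positivity
  refine ContinuousLinearMap.opNorm_le_bound _ hC fun u => ?_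
  refine ContinuousLinearMap.opNorm_le_bound _ (mul_nonneg hC (norm_nonneg u)) fun v => ?_
  rw [ContinuousLinearMap.sub_apply, ContinuousLinearMap.sub_apply,
    residHess_apply hAd hA'd, residHess_apply hAd hA'd]
  set a := resid A z (thMk x y) with hadef
  set c := resid A z (thMk xs ys) with hcdef
  set b := D2Fa (px p d) (py p d) A (thMk x y) u v with hbdef
  set e := D2Fa (px p d) (py p d) A (thMk xs ys) u v with hedef
  -- bound ‖e‖ and ‖b - e‖
  have hbap : b = fderiv ℝ A x (px p d u) (py p d v) +
      (fderiv ℝ A x (px p d v) (py p d u) +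
        fderiv ℝ (fderiv ℝ A) x (px p d u) (px p d v) y) := by
    rw [hbdef, D2Fa_apply, px_thMk, py_thMk]
  have heap : e = fderiv ℝ A xs (px p d u) (py p d v) +
      (fderiv ℝ A xs (px p d v) (py p d u) +
        fderiv ℝ (fderiv ℝ A) xs (px p d u) (px p d v) ys) := by
    rw [hedef, D2Fa_apply, px_thMk, py_thMk]
  have mxu := norm_px_le u; have mxv := norm_px_le v
  have myu := norm_py_le u; have myv := norm_py_le v
  have mall : 0 ≤ ‖u‖ * ‖v‖ := mul_nonneg (norm_nonneg u) (norm_nonneg v)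
  have he : ‖e‖ ≤ (σ2 * ‖ys‖ + 2 * σ1) * (‖u‖ * ‖v‖) := by
    rw [heap]
    have t1 := hA1ap xs hxs (px p d u) (py p d v)
    have t2 := hA1ap xs hxs (px p d v) (py p d u)
    have t3 := hA2ap xs hxs (px p d u) (px p d v) ys
    have htri : ‖fderiv ℝ A xs (px p d u) (py p d v) +
        (fderiv ℝ A xs (px p d v) (py p d u) +
          fderiv ℝ (fderiv ℝ A) xs (px p d u) (px p d v) ys)‖
        ≤ ‖fderiv ℝ A xs (px p d u) (py p d v)‖ +
          (‖fderiv ℝ A xs (px p d v) (py p d u)‖ +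
            ‖fderiv ℝ (fderiv ℝ A) xs (px p d u) (px p d v) ys‖) :=
      le_trans (norm_add_le _ _) (by gcongr; exact norm_add_le _ _)
    have m1 : σ1 * ‖px p d u‖ * ‖py p d v‖ ≤ σ1 * (‖u‖ * ‖v‖) := by
      rw [mul_assoc]
      exact mul_le_mul_of_nonneg_left
        (mul_le_mul mxu myv (norm_nonneg _) (norm_nonneg u)) hσ1n
    have m2 : σ1 * ‖px p d v‖ * ‖py p d u‖ ≤ σ1 * (‖u‖ * ‖v‖) := by
      rw [mul_assoc]
      refine mul_le_mul_of_nonneg_left ?_ hσ1n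
      calc ‖px p d v‖ * ‖py p d u‖ ≤ ‖v‖ * ‖u‖ :=
            mul_le_mul mxv myu (norm_nonneg _) (norm_nonneg v)
      _ = ‖u‖ * ‖v‖ := mul_comm _ _
    have m3 : σ2 * ‖px p d u‖ * ‖px p d v‖ * ‖ys‖ ≤ σ2 * ‖ys‖ * (‖u‖ * ‖v‖) := by
      have : ‖px p d u‖ * ‖px p d v‖ ≤ ‖u‖ * ‖v‖ :=
        mul_le_mul mxu mxv (norm_nonneg _) (norm_nonneg u)
      nlinarith [norm_nonneg ys, mul_nonneg hσ2n (norm_nonneg ys)]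
    nlinarith [htri, t1, t2, t3]
  have hbe : ‖b - e‖ ≤ ((σ3 * ‖ys‖ + σ2) * ‖x - xs‖ + 2 * σ2 * ‖y - ys‖) * (‖u‖ * ‖v‖) := by
    have hsplit : b - e
        = (fderiv ℝ A x (px p d u) (py p d v) - fderiv ℝ A xs (px p d u) (py p d v)) +
          ((fderiv ℝ A x (px p d v) (py p d u) - fderiv ℝ A xs (px p d v) (py p d u)) +
            ((fderiv ℝ (fderiv ℝ A) x (px p d u) (px p d v) (y - ys)) +
              (fderiv ℝ (fderiv ℝ A) x (px p d u) (px p d v) ys -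
                fderiv ℝ (fderiv ℝ A) xs (px p d u) (px p d v) ys))) := by
      rw [hbap, heap, map_sub]; abel
    have t1 := lip1ap (px p d u) (py p d v)
    have t2 := lip1ap (px p d v) (py p d u)
    have t3 := hA2ap x hx (px p d u) (px p d v) (y - ys)
    have t4 := lip2ap (px p d u) (px p d v) ys
    have htri : ‖b - e‖
        ≤ ‖fderiv ℝ A x (px p d u) (py p d v) - fderiv ℝ A xs (px p d u) (py p d v)‖ +
          (‖fderiv ℝ A x (px p d v) (py p d u) - fderiv ℝ A xs (px p d v) (py p d u)‖ +
            (‖fderiv ℝ (fderiv ℝ A) x (px p d u) (px p d v) (y - ys)‖ +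
              ‖fderiv ℝ (fderiv ℝ A) x (px p d u) (px p d v) ys -
                fderiv ℝ (fderiv ℝ A) xs (px p d u) (px p d v) ys‖)) := by
      rw [hsplit]
      refine le_trans (norm_add_le _ _) ?_
      gcongr
      refine le_trans (norm_add_le _ _) ?_
      gcongr
      exact norm_add_le _ _
    have hcross := cross_le u v
    have m3 : ‖px p d u‖ * ‖px p d v‖ ≤ ‖u‖ * ‖v‖ :=
      mul_le_mul mxu mxv (norm_nonneg _) (norm_nonneg u)
    have hxxs : 0 ≤ ‖x - xs‖ := norm_nonneg _
    have hyys : 0 ≤ ‖y - ys‖ := norm_nonneg _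
    have hpxu : 0 ≤ ‖px p d u‖ := norm_nonneg _
    have hpxv : 0 ≤ ‖px p d v‖ := norm_nonneg _
    have hpyu : 0 ≤ ‖py p d u‖ := norm_nonneg _
    have hpyv : 0 ≤ ‖py p d v‖ := norm_nonneg _
    nlinarith [htri, t1, t2, t3, t4, mul_nonneg hσ2n hxxs, mul_nonneg hσ2n hyys,
      mul_nonneg (mul_nonneg hσ3n hxxs) (norm_nonneg ys),
      mul_nonneg (mul_nonneg hσ2n hyys) mall,
      mul_le_mul_of_nonneg_left hcross (mul_nonneg hσ2n hxxs),
      mul_le_mul_of_nonneg_left m3 (mul_nonneg (mul_nonneg hσ3n hxxs) (norm_nonneg ys)),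
      mul_le_mul_of_nonneg_left m3 (mul_nonneg hσ2n hyys)]
  -- combine
  have hsum : (-∑ ℓ, a ℓ * b ℓ) - (-∑ ℓ, c ℓ * e ℓ)
      = -((∑ ℓ, (a - c) ℓ * e ℓ) + ∑ ℓ, a ℓ * (b - e) ℓ) := by
    have hs : (∑ ℓ, (a - c) ℓ * e ℓ) + ∑ ℓ, a ℓ * (b - e) ℓ
        = (∑ ℓ, a ℓ * b ℓ) - ∑ ℓ, c ℓ * e ℓ := by
      rw [← Finset.sum_add_distrib, ← Finset.sum_sub_distrib]
      refine Finset.sum_congr rfl fun ℓ _ => ?_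
      have h1 : (a - c) ℓ = a ℓ - c ℓ := rfl
      have h2 : (b - e) ℓ = b ℓ - e ℓ := rfl
      rw [h1, h2]; ring
    rw [hs]; ring
  rw [Real.norm_eq_abs, hsum, abs_neg]
  calc |(∑ ℓ, (a - c) ℓ * e ℓ) + ∑ ℓ, a ℓ * (b - e) ℓ|
      ≤ |∑ ℓ, (a - c) ℓ * e ℓ| + |∑ ℓ, a ℓ * (b - e) ℓ| := abs_add_le _ _
  _ ≤ ‖a - c‖ * ‖e‖ + ‖a‖ * ‖b - e‖ := add_le_add (sum_mul_le _ _) (sum_mul_le _ _)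
  _ ≤ ρ1 * ((σ2 * ‖ys‖ + 2 * σ1) * (‖u‖ * ‖v‖))
      + (‖w‖ + ρ1) * (((σ3 * ‖ys‖ + σ2) * ‖x - xs‖ + 2 * σ2 * ‖y - ys‖) * (‖u‖ * ‖v‖)) := by
    refine add_le_add ?_ ?_
    · exact mul_le_mul hρ1bound he (norm_nonneg e) hρ1n
    · refine mul_le_mul hanorm hbe (norm_nonneg _) ?_
      positivity
  _ = ((σ2 * ‖ys‖ + 2 * σ1) * ρ1
      + (‖w‖ + ρ1) * ((σ3 * ‖ys‖ + σ2) * ‖x - xs‖ + 2 * σ2 * ‖y - ys‖)) * ‖u‖ * ‖v‖ := by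
    ring
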